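/- Let Q = {y ∈ Q^n | A y ≤ c} with A ∈ Q^{m×n} of full column rank whose first n rows are linearly independent, and let A₀ = [A, A'] where A' = [e_{n+1},...,e_m] (unit columns), so A₀ is invertible. Let W = {(v, w, v₀) ∈ Q^n × Q^{m−n} × Q | −[vᵀ,wᵀ]A₀⁻¹c + v₀ ≥ 0, [vᵀ,wᵀ]A₀⁻¹ ≥ 0} and let P = proj(W; {v, v₀}) be the initial redundancy test cone. For a subset u of p of the variables y, let W⁰ be the analogous cone built from the partition y = (u, x) (using B₀ from the columns of A corresponding to x, augmented to be invertible). Then the redundancy test cone P_u = proj(W⁰; {v_u, v_u0}) is obtained from P by setting the coefficients of the p variables of v corresponding to u equal to 0; that is, P_u = P|_{v₁ = 0} where v₁ is the subvector of v indexed by u. -/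

import Mathlib

open Matrix

/-- Augment an `m × k` matrix (with `k ≤ m`) with the last `m − k` standard
basis columns, producing a square matrix `[[M₁, 0], [M₂, I]]`. -/
def augMat (m k : ℕ) (M : Matrix (Fin m) (Fin k) ℚ) : Matrix (Fin m) (Fin m) ℚ :=
  Matrix.of fun i j =>
    if h : (j : ℕ) < k then M i ⟨(j : ℕ), h⟩
    else if (i : ℕ) = (j : ℕ) then 1 else 0

/-- The first `p` columns of `A` (the columns corresponding to `u`). -/
def firstCols (m n p : ℕ) (hpn : p ≤ n) (A : Matrix (Fin m) (Fin n) ℚ) :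
    Matrix (Fin m) (Fin p) ℚ :=
  Matrix.of fun i j => A i (Fin.castLE hpn j)

/-- The last `n − p` columns of `A` (the columns corresponding to `x`). -/
def lastCols (m n p : ℕ) (hpn : p ≤ n) (A : Matrix (Fin m) (Fin n) ℚ) :
    Matrix (Fin m) (Fin (n - p)) ℚ :=
  Matrix.of fun i j => A i ⟨p + (j : ℕ), by have := j.2; omega⟩

/-- The initial redundancy test cone `P = proj(W; {v, v₀})` where
`W = {(v,w,v₀) | −[vᵀ,wᵀ]A₀⁻¹c + v₀ ≥ 0, [vᵀ,wᵀ]A₀⁻¹ ≥ 0}`;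
here `y` plays the role of `[vᵀ, wᵀ]` and `A₀ = [A, e_{n+1}, …, e_m]`. -/
def initialTestCone (m n : ℕ) (hnm : n ≤ m) (A : Matrix (Fin m) (Fin n) ℚ)
    (c : Fin m → ℚ) : Set ((Fin n → ℚ) × ℚ) :=
  { vv | ∃ y : Fin m → ℚ,
      (∀ i : Fin n, y (Fin.castLE hnm i) = vv.1 i) ∧
      0 ≤ Matrix.vecMul y (augMat m n A)⁻¹ ∧
      0 ≤ -(Matrix.vecMul y (augMat m n A)⁻¹ ⬝ᵥ c) + vv.2 }

/-- The redundancy test cone `P_u = proj(W⁰; {v_u, v_{u0}})` for the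
partition `y = (u, x)` of the variables, with `W⁰` built from
`B₀ = [lastCols A, unit columns]` and `A_u = firstCols A`. -/
def testCone (m n p : ℕ) (hpn : p ≤ n) (hq : n - p ≤ m)
    (A : Matrix (Fin m) (Fin n) ℚ) (c : Fin m → ℚ) :
    Set ((Fin (n - p) → ℚ) × ℚ) :=
  { vv | ∃ y : Fin m → ℚ,
      (∀ i : Fin (n - p), y (Fin.castLE hq i) = vv.1 i) ∧
      Matrix.vecMul (Matrix.vecMul y (augMat m (n - p) (lastCols m n p hpn A))⁻¹)
        (firstCols m n p hpn A) = 0 ∧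
      0 ≤ Matrix.vecMul y (augMat m (n - p) (lastCols m n p hpn A))⁻¹ ∧
      0 ≤ -(Matrix.vecMul y (augMat m (n - p) (lastCols m n p hpn A))⁻¹ ⬝ᵥ c) + vv.2 }

/-- Extend a vector on the `x`-coordinates by zeros on the `u`-coordinates. -/
def extendZero (n p : ℕ) (v2 : Fin (n - p) → ℚ) : Fin n → ℚ :=
  fun j =>
    if h : (j : ℕ) < p then 0
    else v2 ⟨(j : ℕ) - p, by have := j.2; omega⟩


lemma vecMul_augMat {m k : ℕ} (M : Matrix (Fin m) (Fin k) ℚ) (z : Fin m → ℚ) (j : Fin m) :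
    Matrix.vecMul z (augMat m k M) j =
      if h : (j : ℕ) < k then Matrix.vecMul z M ⟨(j : ℕ), h⟩ else z j := by
  by_cases h : (j : ℕ) < k
  · simp [Matrix.vecMul, dotProduct, augMat, h]
  · simp only [Matrix.vecMul, dotProduct, augMat, h, dif_neg, of_apply, dite_false,
      mul_ite, mul_one, mul_zero, dif_pos, Fin.val_eq_val]
    rw [Finset.sum_ite_eq' Finset.univ j z]
    simp

lemma sum_castLE {m k : ℕ} (hk : k ≤ m) (f : Fin m → ℚ)
    (hf : ∀ j : Fin m, ¬(j : ℕ) < k → f j = 0) :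
    ∑ i : Fin m, f i = ∑ i : Fin k, f (Fin.castLE hk i) := by
  have h1 : ∑ i : Fin k, f (Fin.castLE hk i) =
      ∑ j ∈ Finset.univ.map (Fin.castLEEmb hk), f j := by
    rw [Finset.sum_map]; rfl
  rw [h1]
  refine (Finset.sum_subset (Finset.subset_univ _) ?_).symm
  intro j _ hj
  refine hf j fun hlt => hj ?_
  simp only [Finset.mem_map, Finset.mem_univ, true_and]
  exact ⟨⟨(j : ℕ), hlt⟩, by ext; simp⟩

lemma augMat_isUnit {m k : ℕ} (hk : k ≤ m) (M : Matrix (Fin m) (Fin k) ℚ)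
    (h : LinearIndependent ℚ fun i : Fin k => M (Fin.castLE hk i)) : IsUnit (augMat m k M) := by
  rw [← Matrix.linearIndependent_rows_iff_isUnit]
  rw [Fintype.linearIndependent_iff] at h ⊢
  intro g hg
  have hz : ∀ j : Fin m, ¬(j : ℕ) < k → g j = 0 := by
    intro j hj
    have := congrFun hg j
    simpa [augMat, Finset.sum_apply, Pi.smul_apply, hj, Fin.val_eq_val,
      Finset.sum_ite_eq' Finset.univ j g] using this
  intro i
  by_cases hi : (i : ℕ) < k
  · have key : ∀ j : Fin k, ∑ i : Fin k, g (Fin.castLE hk i) * M (Fin.castLE hk i) j = 0 := by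
      intro j
      have h1 := congrFun hg (Fin.castLE hk j)
      simp only [Finset.sum_apply, Pi.smul_apply, Pi.zero_apply, smul_eq_mul, augMat, Matrix.row,
        of_apply, Fin.coe_castLE, j.isLt, dite_true, Fin.eta] at h1
      rw [sum_castLE hk (fun i => g i * M i j) (fun i hi2 => by simp [hz i hi2])] at h1
      exact h1
    have := h (fun i : Fin k => g (Fin.castLE hk i)) (by funext j; simpa using key j) ⟨(i : ℕ), hi⟩
    simpa using this
  · exact hz i hi

lemma vecMul_firstCols {m n p : ℕ} (hpn : p ≤ n) (A : Matrix (Fin m) (Fin n) ℚ)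
    (z : Fin m → ℚ) (j : Fin p) :
    Matrix.vecMul z (firstCols m n p hpn A) j = Matrix.vecMul z A (Fin.castLE hpn j) := rfl

lemma vecMul_lastCols {m n p : ℕ} (hpn : p ≤ n) (A : Matrix (Fin m) (Fin n) ℚ)
    (z : Fin m → ℚ) (j : Fin (n - p)) :
    Matrix.vecMul z (lastCols m n p hpn A) j =
      Matrix.vecMul z A ⟨p + (j : ℕ), by have := j.2; omega⟩ := rfl

/-- The redundancy test cone `P_u` is obtained from the initial redundancy
test cone `P` by setting the coefficients of the `p` variables of `v`
corresponding to `u` equal to `0`: `P_u = P|_{v₁ = 0}`. -/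
theorem testCone_eq_initialTestCone_restricted (m n p : ℕ)
    (hpn : p ≤ n) (hnm : n ≤ m) (hq : n - p ≤ m)
    (A : Matrix (Fin m) (Fin n) ℚ) (c : Fin m → ℚ)
    (hrank : A.rank = n)
    (hAindep : LinearIndependent ℚ (fun i : Fin n => A (Fin.castLE hnm i)))
    (hBindep : LinearIndependent ℚ
      (fun i : Fin (n - p) => lastCols m n p hpn A (Fin.castLE hq i))) :
    ∀ (v2 : Fin (n - p) → ℚ) (v0 : ℚ),
      (v2, v0) ∈ testCone m n p hpn hq A c ↔
        (extendZero n p v2, v0) ∈ initialTestCone m n hnm A c := by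
  intro v2 v0
  have hUA : IsUnit (augMat m n A) := augMat_isUnit hnm A hAindep
  have hUB : IsUnit (augMat m (n - p) (lastCols m n p hpn A)) :=
    augMat_isUnit hq _ hBindep
  have hA1 : augMat m n A * (augMat m n A)⁻¹ = 1 :=
    Matrix.mul_nonsing_inv _ ((Matrix.isUnit_iff_isUnit_det _).1 hUA)
  have hB2 : (augMat m (n - p) (lastCols m n p hpn A))⁻¹ *
      augMat m (n - p) (lastCols m n p hpn A) = 1 :=
    Matrix.nonsing_inv_mul _ ((Matrix.isUnit_iff_isUnit_det _).1 hUB)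
  have hB1 : augMat m (n - p) (lastCols m n p hpn A) *
      (augMat m (n - p) (lastCols m n p hpn A))⁻¹ = 1 :=
    Matrix.mul_nonsing_inv _ ((Matrix.isUnit_iff_isUnit_det _).1 hUB)
  have hA2 : (augMat m n A)⁻¹ * augMat m n A = 1 :=
    Matrix.nonsing_inv_mul _ ((Matrix.isUnit_iff_isUnit_det _).1 hUA)
  constructor
  · rintro ⟨y, h1, h2, h3, h4⟩
    set z := Matrix.vecMul y (augMat m (n - p) (lastCols m n p hpn A))⁻¹ with hzdef
    have hz : Matrix.vecMul (Matrix.vecMul z (augMat m n A)) (augMat m n A)⁻¹ = z := by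
      rw [Matrix.vecMul_vecMul, hA1, Matrix.vecMul_one]
    have hyz : Matrix.vecMul z (augMat m (n - p) (lastCols m n p hpn A)) = y := by
      rw [hzdef, Matrix.vecMul_vecMul, hB2, Matrix.vecMul_one]
    refine ⟨Matrix.vecMul z (augMat m n A), ?_, ?_, ?_⟩
    · intro i
      show _ = extendZero n p v2 i
      rw [vecMul_augMat]
      have hi : ((Fin.castLE hnm i : Fin m) : ℕ) < n := i.isLt
      rw [dif_pos hi]
      unfold extendZero
      by_cases hip : (i : ℕ) < p
      · rw [dif_pos hip]
        have h5 := congrFun h2 ⟨(i : ℕ), hip⟩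
        rw [vecMul_firstCols] at h5
        have : (Fin.castLE hpn ⟨(i : ℕ), hip⟩) = (⟨((Fin.castLE hnm i : Fin m) : ℕ), hi⟩ : Fin n) := by
          ext; simp
        rw [this] at h5
        exact h5
      · rw [dif_neg hip]
        have hlt : (i : ℕ) - p < n - p := by have := i.isLt; omega
        have h5 := h1 ⟨(i : ℕ) - p, hlt⟩
        rw [← hyz, vecMul_augMat] at h5
        have hq2 : ((Fin.castLE hq ⟨(i : ℕ) - p, hlt⟩ : Fin m) : ℕ) < n - p := hlt
        rw [dif_pos hq2] at h5
        rw [vecMul_lastCols] at h5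
        have : (⟨p + ((Fin.castLE hq ⟨(i : ℕ) - p, hlt⟩ : Fin m) : ℕ), by omega⟩ : Fin n) =
            (⟨((Fin.castLE hnm i : Fin m) : ℕ), hi⟩ : Fin n) := by
          ext; simp; omega
        rw [this] at h5
        exact h5
    · rw [hz]; exact h3
    · rw [hz]; exact h4
  · rintro ⟨y, h1, h3, h4⟩
    set z := Matrix.vecMul y (augMat m n A)⁻¹ with hzdef
    have hyz : Matrix.vecMul z (augMat m n A) = y := by
      rw [hzdef, Matrix.vecMul_vecMul, hA2, Matrix.vecMul_one]
    have hz : Matrix.vecMul (Matrix.vecMul z (augMat m (n - p) (lastCols m n p hpn A)))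
        (augMat m (n - p) (lastCols m n p hpn A))⁻¹ = z := by
      rw [Matrix.vecMul_vecMul, hB1, Matrix.vecMul_one]
    have key : ∀ (j : Fin n), Matrix.vecMul z A j = extendZero n p v2 ⟨(j : ℕ), j.isLt⟩ := by
      intro j
      have h5 := h1 ⟨(j : ℕ), j.isLt⟩
      rw [← hyz, vecMul_augMat] at h5
      have hj : ((Fin.castLE hnm ⟨(j : ℕ), j.isLt⟩ : Fin m) : ℕ) < n := j.isLt
      rw [dif_pos hj] at h5
      have : (⟨((Fin.castLE hnm ⟨(j : ℕ), j.isLt⟩ : Fin m) : ℕ), hj⟩ : Fin n) = j := by ext; simp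
      rw [this] at h5
      exact h5
    refine ⟨Matrix.vecMul z (augMat m (n - p) (lastCols m n p hpn A)), ?_, ?_, ?_, ?_⟩
    · intro i
      rw [vecMul_augMat]
      have hi : ((Fin.castLE hq i : Fin m) : ℕ) < n - p := i.isLt
      rw [dif_pos hi, vecMul_lastCols]
      have hkey := key ⟨p + ((Fin.castLE hq i : Fin m) : ℕ), by have := i.isLt; omega⟩
      rw [hkey]
      unfold extendZero
      rw [dif_neg (by simp)]
      congr 1
      ext
      simp
    · funext j
      rw [hz, vecMul_firstCols, key]
      unfold extendZero
      rw [dif_pos (by simpa using j.isLt)]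
      simp
    · rw [hz]; exact h3
    · rw [hz]; exact h4
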